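/- Let N ≥ 2, ω = exp(2πi/N), and let a, b, r ∈ ℂ with a ≠ 0, r^N = a^N - b^N, and a - b ω^γ ≠ 0 for all γ. Set x = r/a, y = b/a, so x^N + y^N = 1, and let w be the cyclic function with w(0)=1, w(γ)/w(γ-1) = y/(1 - ω^γ x). Let U, V be the clock and shift operators on ℂ^N with basis |γ⟩, and for ρ ∈ ℤ/N define ψ_ρ = ∑_{γ ∈ ℤ/N} w(γ - ρ)|γ⟩. Then U^{-1}(a - bV) ψ_ρ = r ω^{-ρ} ψ_ρ. -/

import Mathlib

/-- One-site eigenvectors of the off-diagonal entry of the BBS `L`-operator: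
with `x = r/a`, `y = b/a`, `r^N = a^N - b^N`, and `w` the cyclic function at
the Fermat point `(x,y)`, the vectors `ψ_ρ = ∑_γ w(γ-ρ)|γ⟩` satisfy
`U⁻¹(a - bV) ψ_ρ = r ω^{-ρ} ψ_ρ`. -/
theorem one_site_eigenvector (N : ℕ) [NeZero N] (hN : 2 ≤ N)
    (ω : ℂ) (hω : ω = Complex.exp (2 * Real.pi * Complex.I / N))
    (a b r : ℂ) (ha : a ≠ 0) (hr : r ^ N = a ^ N - b ^ N)
    (hab : ∀ γ : ℤ, a - b * ω ^ γ ≠ 0)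
    (x y : ℂ) (hx : x = r / a) (hy : y = b / a)
    (w : ℤ → ℂ) (h0 : w 0 = 1)
    (hrec : ∀ γ : ℤ, w γ = w (γ - 1) * (y / (1 - ω ^ γ * x)))
    (U V : Matrix (ZMod N) (ZMod N) ℂ)
    (hU : ∀ i j : ZMod N, U i j = if i = j then ω ^ (i.val) else 0)
    (hV : ∀ i j : ZMod N, V i j = if i = j + 1 then 1 else 0)
    (ψ : ZMod N → ZMod N → ℂ)
    (hψ : ∀ ρ γ : ZMod N, ψ ρ γ = w ((γ - ρ).val)) :
    ∀ ρ : ZMod N,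
      (U⁻¹ * (a • (1 : Matrix (ZMod N) (ZMod N) ℂ) - b • V)).mulVec (ψ ρ) =
        (r * ω ^ (-(ρ.val : ℤ))) • ψ ρ := by
  have hNpos : 0 < N := Nat.pos_of_ne_zero (NeZero.ne N)
  have hω0 : ω ≠ 0 := by rw [hω]; exact Complex.exp_ne_zero _
  have hprim : IsPrimitiveRoot ω N := by
    rw [hω]; exact Complex.isPrimitiveRoot_exp N (NeZero.ne N)
  have hωN : ω ^ N = 1 := hprim.pow_eq_one
  subst hx hy
  -- `y ≠ 0`
  have hy0 : b / a ≠ 0 := by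
    intro h
    have h2 := hrec 0
    rw [h] at h2
    simp [h0] at h2
  -- Fermat relation
  have hxy : (r / a) ^ N = 1 - (b / a) ^ N := by
    rw [div_pow, div_pow, hr, sub_div, div_self (pow_ne_zero N ha)]
  -- nonvanishing of denominators
  have hden : ∀ γ : ℤ, 1 - ω ^ γ * (r / a) ≠ 0 := by
    intro γ h
    have h1 : ω ^ γ * (r / a) = 1 := by
      have := sub_eq_zero.mp h; exact this.symm
    have h2 : (ω ^ γ) ^ N * (r / a) ^ N = 1 := by
      rw [← mul_pow, h1, one_pow]
    have h3 : (ω ^ γ) ^ (N : ℕ) = 1 := by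
      rw [← zpow_natCast (ω ^ γ) N, ← zpow_mul, mul_comm, zpow_mul, zpow_natCast, hωN, one_zpow]
    rw [h3, one_mul, hxy] at h2
    have : (b / a) ^ N = 0 := by linear_combination -h2
    exact hy0 (pow_eq_zero_iff (NeZero.ne N) |>.mp this)
  -- the key one-step recurrence in cleared form
  have keyrec : ∀ γ : ℤ, a * w γ - b * w (γ - 1) = r * ω ^ γ * w γ := by
    intro γ
    have h1 : w γ * (1 - ω ^ γ * (r / a)) = w (γ - 1) * (b / a) := by
      rw [hrec γ, mul_assoc, div_mul_cancel₀ _ (hden γ)]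
    field_simp at h1
    linear_combination h1
  -- the product over a full period of roots of unity
  have hprod : ∀ z : ℂ, ∏ j ∈ Finset.range N, (1 - ω ^ j * z) = 1 - z ^ N := by
    intro z
    have h1 := X_pow_sub_C_eq_prod hprim hNpos (rfl : z ^ N = z ^ N)
    have h2 := congrArg (Polynomial.eval 1) h1
    simp only [Polynomial.eval_sub, Polynomial.eval_pow, Polynomial.eval_X, Polynomial.eval_one,
      Polynomial.eval_prod, Polynomial.eval_mul, Polynomial.eval_C, one_pow] at h2
    rw [← h2]
  -- iterated recurrence
  have hstep : ∀ (k : ℤ) (n : ℕ), w (k + n) =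
      w k * ∏ j ∈ Finset.range n, ((b / a) / (1 - ω ^ (k + 1 + j) * (r / a))) := by
    intro k n
    induction n with
    | zero => simp
    | succ n ih =>
      have h2 := hrec (k + n + 1)
      rw [show (k + ((n : ℕ) + 1 : ℕ) : ℤ) = (k + n + 1) by push_cast; ring, h2,
        show (k + (n : ℤ) + 1 - 1 : ℤ) = k + n by ring, ih, Finset.prod_range_succ,
        show (k + 1 + (n : ℤ) : ℤ) = k + n + 1 by ring]
      ring
  -- periodicity
  have wper : ∀ k : ℤ, w (k + N) = w k := by
    intro k
    have h1 := hstep k N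
    have h2 : ∏ j ∈ Finset.range N, ((b / a) / (1 - ω ^ (k + 1 + j) * (r / a))) = 1 := by
      rw [Finset.prod_div_distrib, Finset.prod_const, Finset.card_range]
      have h3 : ∀ j ∈ Finset.range N,
          (1 - ω ^ (k + 1 + (j : ℤ)) * (r / a)) = 1 - ω ^ j * (ω ^ (k + 1) * (r / a)) := by
        intro j _
        rw [zpow_add₀ hω0, zpow_natCast]
        ring
      rw [Finset.prod_congr rfl h3, hprod]
      have h4 : (ω ^ (k + 1) * (r / a)) ^ N = (r / a) ^ N := by
        rw [mul_pow, ← zpow_natCast (ω ^ (k + 1)) N, ← zpow_mul, mul_comm (k+1), zpow_mul,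
          zpow_natCast, hωN, one_zpow, one_mul]
      rw [h4, hxy]
      have : (1 : ℂ) - (1 - (b / a) ^ N) = (b / a) ^ N := by ring
      rw [this, div_self (pow_ne_zero N hy0)]
    rw [h1, h2, mul_one]
  -- the recurrence transported to `ZMod` values
  have key : ∀ d : ZMod N, a * w d.val - b * w ((d - 1).val) = r * ω ^ (d.val : ℤ) * w d.val := by
    intro d
    have hA : w (((d - 1).val : ℤ)) = w ((d.val : ℤ) - 1) := by
      rcases Nat.eq_zero_or_pos d.val with h | h
      · have hd0 : d = 0 := (ZMod.val_eq_zero d).mp h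
        subst hd0
        rw [zero_sub, h]
        have hNe : (-1 : ZMod N) = ((N - 1 : ℕ) : ZMod N) := by
          rw [Nat.cast_sub (by omega : 1 ≤ N)]
          simp
        have hv : ((-1 : ZMod N).val : ℤ) = (N : ℤ) - 1 := by
          rw [hNe, ZMod.val_cast_of_lt (by omega)]
          omega
        rw [hv, show ((N : ℤ) - 1) = -1 + N by ring, wper (-1)]
        norm_num
      · haveI : Fact (1 < N) := ⟨by omega⟩
        have hle : (1 : ZMod N).val ≤ d.val := by
          rw [ZMod.val_one N]; exact h
        rw [ZMod.val_sub hle, ZMod.val_one N]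
        congr 1
        omega
    have := keyrec (d.val : ℤ)
    rwa [← hA] at this
  -- the power bookkeeping
  intro ρ
  funext i
  rw [← Matrix.mulVec_mulVec]
  -- compute U⁻¹
  have hUinv : U⁻¹ = Matrix.diagonal (fun i : ZMod N => (ω ^ (i.val))⁻¹) := by
    apply Matrix.inv_eq_right_inv
    have hUd : U = Matrix.diagonal (fun i : ZMod N => ω ^ (i.val)) := by
      ext i j
      rw [hU, Matrix.diagonal_apply]
    rw [hUd, Matrix.diagonal_mul_diagonal]
    rw [show (fun i : ZMod N => ω ^ i.val * (ω ^ i.val)⁻¹) = fun _ => (1 : ℂ) by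
      funext i; exact mul_inv_cancel₀ (pow_ne_zero _ hω0)]
    exact Matrix.diagonal_one
  rw [hUinv, Matrix.mulVec_diagonal]
  have hVmul : V.mulVec (ψ ρ) i = ψ ρ (i - 1) := by
    unfold Matrix.mulVec dotProduct
    rw [Finset.sum_eq_single (i - 1)]
    · simp [hV]
    · intro j _ hj
      have hne : i ≠ j + 1 := fun hc => hj (by rw [hc]; ring)
      simp [hV, hne]
    · intro hc; exact absurd (Finset.mem_univ _) hc
  rw [Matrix.sub_mulVec, Matrix.smul_mulVec, Matrix.smul_mulVec, Matrix.one_mulVec]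
  simp only [Pi.sub_apply, Pi.smul_apply, smul_eq_mul, hVmul, Pi.smul_apply, smul_eq_mul]
  rw [hψ, hψ]
  have hsub : i - 1 - ρ = (i - ρ) - 1 := by ring
  rw [hsub, key (i - ρ)]
  -- now only powers of ω remain
  have hdvd : (N : ℤ) ∣ (((i - ρ).val : ℤ) + ρ.val - i.val) := by
    have h5 : ((((i - ρ).val : ℤ) + ρ.val - i.val : ℤ) : ZMod N) = 0 := by
      push_cast
      simp only [ZMod.natCast_val, ZMod.cast_id]
      ring
    exact (ZMod.intCast_zmod_eq_zero_iff_dvd _ N).mp h5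
  have h1 : ω ^ ((((i - ρ).val : ℤ) + ρ.val - i.val)) = 1 :=
    (hprim.zpow_eq_one_iff_dvd _).mpr hdvd
  have hpow : (ω ^ (i.val))⁻¹ * ω ^ (((i - ρ).val : ℤ)) = ω ^ (-(ρ.val : ℤ)) := by
    rw [← zpow_natCast ω i.val, ← zpow_neg, ← zpow_add₀ hω0,
      show (-(i.val : ℤ) + ((i - ρ).val : ℤ)) = ((((i - ρ).val : ℤ) + ρ.val - i.val)) + (-(ρ.val : ℤ)) by ring,
      zpow_add₀ hω0, h1, one_mul]
  calc (ω ^ i.val)⁻¹ * (r * ω ^ (((i - ρ).val : ℤ)) * w ((i - ρ).val))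
      = ((ω ^ i.val)⁻¹ * ω ^ (((i - ρ).val : ℤ))) * (r * w ((i - ρ).val)) := by ring
    _ = r * ω ^ (-(ρ.val : ℤ)) * w ((i - ρ).val) := by rw [hpow]; ring
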